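/- arXiv:2203.05615 — 2 statements merged into one kernel-verified Lean document; each statement's English description precedes it below -/
import Mathlib

section
/- Let κ be a regular uncountable cardinal, θ < κ a regular cardinal, and (T, <_T) a tree of height θ with at least κ many θ-branches all of whose levels have size less than κ. Then for every κ-complete ideal J over κ extending the bounded ideal and every B ∈ J⁺, there exists α ∈ B such that the set {ξ < θ : {β ∈ B : Δ(b_ᾱ, b_β̄) = ξ} ∈ J⁺} has order type θ, where ⟨b_β : β < κ⟩ enumerates θ-branches injectively and Δ(b, b′) denotes the level at which the branches b and b′ split. -/
open Cardinal Ordinal Set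

/-- The order type of a set of ordinals. -/
noncomputable def otp (S : Set Ordinal.{0}) : Ordinal.{1} :=
  @Ordinal.type S (Subrel (· < ·) S)
    (RelEmbedding.isWellOrder (Subrel.relEmbedding (· < ·) S))

lemma otp_le_of_subset_Iio {S : Set Ordinal.{0}} {o : Ordinal.{0}} (hS : S ⊆ Set.Iio o) :
    otp S ≤ Ordinal.lift.{1} o := by
  have h1 : otp (Set.Iio o) = Ordinal.lift.{1} o := by
    have := Ordinal.type_subrel ((· < ·) : Ordinal → Ordinal → Prop) o
    rw [Ordinal.typein_ordinal] at this
    exact this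
  rw [← h1]
  haveI : ∀ S : Set Ordinal.{0}, IsWellOrder S (Subrel (· < ·) S) := fun S =>
    RelEmbedding.isWellOrder (Subrel.relEmbedding (· < ·) S)
  exact RelEmbedding.ordinal_type_le ⟨⟨Set.inclusion hS, Set.inclusion_injective hS⟩, Iff.rfl⟩

lemma otp_eq_of_unbounded {θ : Cardinal.{0}} (hθreg : θ.IsRegular) {S : Set Ordinal.{0}}
    (hS : S ⊆ Set.Iio θ.ord) (hub : ∀ η < θ.ord, ∃ ξ ∈ S, η ≤ ξ) :
    otp S = Ordinal.lift.{1} θ.ord := by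
  refine le_antisymm (otp_le_of_subset_Iio hS) ?_
  rw [Cardinal.lift_ord]; rw [Cardinal.ord_le]
  show Cardinal.lift.{1} θ ≤ Ordinal.card (otp S)
  haveI : ∀ S : Set Ordinal.{0}, IsWellOrder S (Subrel (· < ·) S) := fun S =>
    RelEmbedding.isWellOrder (Subrel.relEmbedding (· < ·) S)
  rw [show Ordinal.card (otp S) = #S from Ordinal.card_type _]
  let ι := Ordinal.ToType.mk (o := θ.ord)
  set S' : Set θ.ord.ToType := {a | (ι.symm a : Ordinal) ∈ S} with hS'
  have hunb : Set.Unbounded (· < ·) S' := by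
    intro a
    obtain ⟨ξ, hξS, hξ⟩ := hub (ι.symm a) (ι.symm a).2
    refine ⟨ι ⟨ξ, hS hξS⟩, ?_, ?_⟩
    · simp [hS', OrderIso.symm_apply_apply, hξS]
    · intro hlt
      rw [← ι.symm.lt_iff_lt, OrderIso.symm_apply_apply] at hlt
      exact absurd hξ (not_le.2 hlt)
  have hcof : θ ≤ #S' := by
    have := Order.cof_le (α := θ.ord.ToType) (s := S')
      (fun a => let ⟨b, hb, hnb⟩ := hunb a; ⟨b, hb, not_lt.1 hnb⟩)
    rwa [Ordinal.cof_toType, hθreg.cof_eq] at this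
  have hemb : Cardinal.lift.{1} #S' ≤ #S := by
    refine le_of_eq_of_le (Cardinal.mk_uLift _).symm
      (Cardinal.mk_le_of_injective
        (f := fun a : ULift.{1} S' => (⟨(ι.symm a.down : Ordinal), a.down.2⟩ : S)) ?_)
    intro x y hxy
    have h1 := congrArg Subtype.val hxy
    exact ULift.down_injective (Subtype.ext (ι.symm.injective (Subtype.ext h1)))
  exact (Cardinal.lift_le.2 hcof).trans hemb

/-- The set of `β ∈ B` whose branch splits from the branch of `α` exactly at level `ξ`. -/
def BSet {T : Type} (B : Set Ordinal.{0}) (b : Ordinal → Set T) (lvl : T → Ordinal.{0})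
    (α ξ : Ordinal) : Set Ordinal :=
  {β : Ordinal | β ∈ B ∧
    (∀ γ < ξ, ∀ t ∈ b α, ∀ t' ∈ b β, lvl t = γ → lvl t' = γ → t = t') ∧
    (∃ t ∈ b α, ∃ t' ∈ b β, lvl t = ξ ∧ lvl t' = ξ ∧ t ≠ t')}

theorem stmt_18 (θ κ : Cardinal.{0}) (hκreg : κ.IsRegular) (hκunc : ℵ₀ < κ)
    (hθreg : θ.IsRegular) (hθκ : θ < κ)
    -- a tree of height `θ`, all of whose levels have size `< κ`
    (T : Type) (tlt : T → T → Prop) (lvl : T → Ordinal.{0})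
    (hlvl : ∀ t, lvl t < θ.ord)
    (hmono : ∀ s t, tlt s t → lvl s < lvl t)
    (hpred : ∀ s s' t, tlt s t → tlt s' t → (tlt s s' ∨ tlt s' s ∨ s = s'))
    (hheight : ∀ γ < θ.ord, ∃ t, lvl t = γ)
    (hlevel : ∀ γ < θ.ord, Cardinal.mk {t : T // lvl t = γ} < κ)
    -- an injective enumeration `⟨b β : β < κ⟩` of `θ`-branches
    (b : Ordinal → Set T)
    (hbchain : ∀ β < κ.ord, ∀ s ∈ b β, ∀ t ∈ b β, tlt s t ∨ tlt t s ∨ s = t)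
    (hbfull : ∀ β < κ.ord, ∀ γ < θ.ord, ∃ t ∈ b β, lvl t = γ)
    (hbinj : ∀ α β : Ordinal, α < β → β < κ.ord → b α ≠ b β)
    -- a `κ`-complete ideal `J` over `κ` extending the bounded ideal
    (J : Set (Set Ordinal.{0}))
    (hJsub : ∀ A ∈ J, A ⊆ Set.Iio κ.ord)
    (hJdown : ∀ A A' : Set Ordinal, A' ∈ J → A ⊆ A' → A ∈ J)
    (hJcomplete : ∀ o < κ.ord, ∀ f : Ordinal → Set Ordinal,
      (∀ i < o, f i ∈ J) → (⋃ i ∈ Set.Iio o, f i) ∈ J)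
    (hJbd : ∀ α < κ.ord, Set.Iio α ∈ J)
    -- a `J`-positive set `B`
    (B : Set Ordinal) (hB : B ⊆ Set.Iio κ.ord) (hBpos : B ∉ J) :
    ∃ α ∈ B, otp {ξ : Ordinal | ξ < θ.ord ∧
      {β : Ordinal | β ∈ B ∧
        (∀ γ < ξ, ∀ t ∈ b α, ∀ t' ∈ b β, lvl t = γ → lvl t' = γ → t = t') ∧
        (∃ t ∈ b α, ∃ t' ∈ b β, lvl t = ξ ∧ lvl t' = ξ ∧ t ≠ t')} ∉ J} =
      Ordinal.lift.{1} θ.ord := by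
  suffices hS : ∃ α ∈ B, otp {ξ : Ordinal | ξ < θ.ord ∧ BSet B b lvl α ξ ∉ J} =
      Ordinal.lift.{1} θ.ord by exact hS
  have hθκord : θ.ord < κ.ord := Cardinal.ord_lt_ord.2 hθκ
  have hθpos : (0 : Ordinal) < θ.ord := by
    have := Cardinal.ord_lt_ord.2 (aleph0_pos.trans_le hθreg.aleph0_le)
    rwa [Cardinal.ord_zero] at this
  have hκpos : (0 : Ordinal) < κ.ord := hθpos.trans hθκord
  have hemptyJ : (∅ : Set Ordinal) ∈ J := hJdown ∅ (Set.Iio 0) (hJbd 0 hκpos) (Set.empty_subset _)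
  have hsingJ : ∀ α, α < κ.ord → ({α} : Set Ordinal) ∈ J := by
    intro α hα
    refine hJdown {α} (Set.Iio (Order.succ α))
      (hJbd _ ((Cardinal.isSuccLimit_ord hκreg.aleph0_le).succ_lt hα)) ?_
    intro x hx
    rw [Set.mem_singleton_iff] at hx
    exact hx ▸ Order.lt_succ α
  by_contra hcon
  push_neg at hcon
  -- every `α ∈ B` has a bound `h α` on its splitting levels
  have hbound : ∀ α, ∃ η, η < θ.ord ∧
      (α ∈ B → ∀ ξ, ξ < θ.ord → BSet B b lvl α ξ ∉ J → ξ < η) := by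
    intro α
    by_cases hαB : α ∈ B
    · by_contra hno
      push_neg at hno
      refine hcon α hαB (otp_eq_of_unbounded hθreg (fun ξ hξ => hξ.1) ?_)
      intro η hη
      obtain ⟨-, ξ, h1, h2, h3⟩ := hno η hη
      exact ⟨ξ, ⟨h1, h2⟩, h3⟩
    · exact ⟨0, hθpos, fun h => absurd h hαB⟩
  choose h hθlt hmain using hbound
  -- find a positive fiber with constant bound ξstar
  have h1 : ∃ η, η < θ.ord ∧ {α | α ∈ B ∧ h α = η} ∉ J := by
    by_contra hno
    push_neg at hno
    exact hBpos (hJdown B _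
      (hJcomplete θ.ord hθκord (fun η => {α | α ∈ B ∧ h α = η}) hno)
      (fun α hα => Set.mem_biUnion (Set.mem_Iio.mpr (hθlt α)) ⟨hα, rfl⟩))
  obtain ⟨ξstar, hξθ, hB'⟩ := h1
  -- find a positive fiber through a fixed node t0 at level ξstar
  have hNcard : #{t : T // lvl t = ξstar} < κ := hlevel _ hξθ
  set o₂ := (#{t : T // lvl t = ξstar}).ord with ho₂def
  have ho₂κ : o₂ < κ.ord := Cardinal.ord_lt_ord.2 hNcard
  have hNeq : Nonempty ({t : T // lvl t = ξstar} ≃ o₂.ToType) :=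
    Cardinal.eq.1 (by rw [Cardinal.mk_toType, Cardinal.card_ord])
  obtain ⟨eqv⟩ := hNeq
  let e2 : Set.Iio o₂ ≃ {t : T // lvl t = ξstar} :=
    (Ordinal.ToType.mk (o := o₂)).toEquiv.trans eqv.symm
  let f2 : Ordinal → Set Ordinal := fun i =>
    {α | (α ∈ B ∧ h α = ξstar) ∧ ∀ hi : i < o₂, ((e2 ⟨i, hi⟩ : {t : T // lvl t = ξstar}) : T) ∈ b α}
  have h2 : ∃ i, i < o₂ ∧ f2 i ∉ J := by
    by_contra hno
    push_neg at hno
    refine hB' (hJdown _ _ (hJcomplete o₂ ho₂κ f2 hno) ?_)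
    rintro α ⟨hαB, hαh⟩
    obtain ⟨t, htb, htl⟩ := hbfull α (hB hαB) ξstar hξθ
    refine Set.mem_biUnion (e2.symm ⟨t, htl⟩).2 ⟨⟨hαB, hαh⟩, ?_⟩
    intro hi
    have he : (⟨(e2.symm ⟨t, htl⟩ : Ordinal), hi⟩ : Set.Iio o₂) = e2.symm ⟨t, htl⟩ :=
      Subtype.ext rfl
    rw [he, e2.apply_symm_apply]
    exact htb
  obtain ⟨i0, hi0, hB''⟩ := h2
  set t0 : T := ((e2 ⟨i0, hi0⟩ : {t : T // lvl t = ξstar}) : T) with ht0def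
  have ht0lvl : lvl t0 = ξstar := (e2 ⟨i0, hi0⟩).2
  -- pick α in the positive fiber
  have hne : (f2 i0).Nonempty := by
    rcases Set.eq_empty_or_nonempty (f2 i0) with he | hne
    · exact absurd (by rw [he]; exact hemptyJ) hB''
    · exact hne
  obtain ⟨α, ⟨hαB, hαh⟩, hαt⟩ := hne
  have ht0α : t0 ∈ b α := hαt hi0
  have hακ : α < κ.ord := hB hαB
  -- uniqueness of nodes at a level within a branch
  have huniq : ∀ β, β < κ.ord → ∀ s ∈ b β, ∀ t ∈ b β, lvl s = lvl t → s = t := by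
    intro β hβ s hs t ht hl
    rcases hbchain β hβ s hs t ht with hc | hc | hc
    · exact absurd hl (ne_of_lt (hmono s t hc))
    · exact absurd hl.symm (ne_of_lt (hmono t s hc))
    · exact hc
  have hbelowt0 : ∀ β, β < κ.ord → t0 ∈ b β → ∀ s ∈ b β, lvl s < ξstar → tlt s t0 := by
    intro β hβ ht0 s hs hlt
    rcases hbchain β hβ s hs t0 ht0 with hc | hc | hc
    · exact hc
    · exact absurd (hmono t0 s hc) (by rw [ht0lvl]; exact not_lt.2 hlt.le)
    · exact absurd hlt (by rw [hc, ht0lvl]; exact lt_irrefl _)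
  -- every element of the fiber is α or splits from α above ξstar
  have hFJ : ∀ ξ, ξ < θ.ord →
      (if ξ = 0 then {α} else if ξstar < ξ then BSet B b lvl α ξ else (∅ : Set Ordinal)) ∈ J := by
    intro ξ hξ
    split_ifs with h0 h1'
    · exact hsingJ α hακ
    · by_contra hpos
      have := hmain α hαB ξ hξ hpos
      rw [hαh] at this
      exact absurd h1' (not_lt.2 this.le)
    · exact hemptyJ
  have hcover : f2 i0 ⊆ ⋃ ξ ∈ Set.Iio θ.ord,
      (fun ξ => if ξ = 0 then {α} else if ξstar < ξ then BSet B b lvl α ξ else (∅ : Set Ordinal)) ξ := by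
    rintro β ⟨⟨hβB, hβh⟩, hβt⟩
    by_cases hβα : β = α
    · refine Set.mem_biUnion (Set.mem_Iio.mpr hθpos) ?_
      show β ∈ (if (0 : Ordinal) = 0 then {α} else if ξstar < 0 then BSet B b lvl α 0 else ∅)
      rw [if_pos rfl]
      exact Set.mem_singleton_iff.2 hβα
    · have hβκ : β < κ.ord := hB hβB
      have ht0β : t0 ∈ b β := hβt hi0
      have hbne : b α ≠ b β := by
        rcases Ne.lt_or_gt hβα with hlt | hlt
        · exact (hbinj β α hlt hακ).symm
        · exact hbinj α β hlt hβκ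
      set D : Set Ordinal := {ξ | ∃ t ∈ b α, ∃ t' ∈ b β, lvl t = ξ ∧ lvl t' = ξ ∧ t ≠ t'} with hD
      have hDne : D.Nonempty := by
        obtain ⟨s, hs⟩ := not_forall.1 (fun hall => hbne (Set.ext hall))
        rcases Classical.em (s ∈ b α) with hsα | hsα
        · have hsβ : s ∉ b β := fun hmem => hs ⟨fun _ => hmem, fun _ => hsα⟩
          obtain ⟨t', ht'b, ht'l⟩ := hbfull β hβκ (lvl s) (hlvl s)
          exact ⟨lvl s, s, hsα, t', ht'b, rfl, ht'l, fun he => hsβ (he ▸ ht'b)⟩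
        · have hsβ : s ∈ b β := by
            by_contra hmem
            exact hs ⟨fun h' => absurd h' hsα, fun h' => absurd h' hmem⟩
          obtain ⟨t, htb, htl⟩ := hbfull α hακ (lvl s) (hlvl s)
          exact ⟨lvl s, t, htb, s, hsβ, htl, rfl, fun he => hsα (he ▸ htb)⟩
      set Δ : Ordinal := Ordinal.lt_wf.min D hDne with hΔdef
      obtain ⟨t, htα, t', ht'β, htl, ht'l, htne⟩ := Ordinal.lt_wf.min_mem D hDne
      rw [← hΔdef] at htl ht'l
      have hminΔ : ∀ γ ∈ D, ¬ γ < Δ := fun γ hγ => Ordinal.lt_wf.not_lt_min D hγ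
      have hΔθ : Δ < θ.ord := htl ▸ hlvl t
      have hΔstar : ξstar < Δ := by
        rcases lt_trichotomy Δ ξstar with hlt | heq | hgt
        · have ha : tlt t t0 := hbelowt0 α hακ ht0α t htα (htl ▸ hlt)
          have hb' : tlt t' t0 := hbelowt0 β hβκ ht0β t' ht'β (ht'l ▸ hlt)
          rcases hpred t t' t0 ha hb' with hc | hc | hc
          · exact absurd (htl.trans ht'l.symm) (ne_of_lt (hmono _ _ hc))
          · exact absurd (ht'l.trans htl.symm) (ne_of_lt (hmono _ _ hc))
          · exact absurd hc htne
        · have ha : t = t0 := huniq α hακ t htα t0 ht0α (by rw [htl, ht0lvl, heq])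
          have hb' : t' = t0 := huniq β hβκ t' ht'β t0 ht0β (by rw [ht'l, ht0lvl, heq])
          exact absurd (ha.trans hb'.symm) htne
        · exact hgt
      have hΔ0 : Δ ≠ 0 := by
        intro hz
        exact absurd (hz ▸ hΔstar) (not_lt_zero (a := ξstar))
      refine Set.mem_biUnion (Set.mem_Iio.mpr hΔθ) ?_
      show β ∈ (if Δ = 0 then {α} else if ξstar < Δ then BSet B b lvl α Δ else ∅)
      rw [if_neg hΔ0, if_pos hΔstar]
      refine ⟨hβB, ?_, t, htα, t', ht'β, htl, ht'l, htne⟩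
      intro γ hγ tt htt tt' htt' hl hl'
      by_contra hne'
      exact hminΔ γ ⟨tt, htt, tt', htt', hl, hl', hne'⟩ hγ
  exact hB'' (hJdown _ _ (hJcomplete θ.ord hθκord _ hFJ) hcover)
end

section
/- Let κ be a regular uncountable cardinal and suppose c : [κ]² → θ witnesses U(κ, 2, θ, 3) with θ ∈ reg(κ). Then for all A, B ∈ [κ]^κ there exists η ∈ A such that otp(c[{η} ⊛ B]) = θ. -/
open Cardinal Ordinal Set

lemma swo (S : Set Ordinal.{0}) : IsWellOrder S (Subrel (· < ·) S) :=
  RelEmbedding.isWellOrder (Subrel.relEmbedding (· < ·) S)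

lemma otp_Iio (o : Ordinal.{0}) : otp (Iio o) = Ordinal.lift.{1} o := by
  rw [← Ordinal.typein_ordinal o]; rfl

lemma otp_le_lift {S : Set Ordinal.{0}} {o : Ordinal.{0}} (h : S ⊆ Iio o) :
    otp S ≤ Ordinal.lift.{1} o := by
  rw [← otp_Iio o]
  have f : Subrel ((· < ·) : Ordinal → Ordinal → Prop) S ↪r
      Subrel ((· < ·) : Ordinal → Ordinal → Prop) (Iio o) :=
    ⟨⟨Set.inclusion h, Set.inclusion_injective h⟩, Iff.rfl⟩
  exact @RelEmbedding.ordinal_type_le _ _ _ _ (swo S) (swo (Iio o)) f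

lemma card_otp (S : Set Ordinal.{0}) : (otp S).card = #S :=
  @Ordinal.card_type _ _ (swo S)

lemma lift_cof_le_mk_of_unbounded {o : Ordinal.{0}} {S : Set Ordinal.{0}} (hS : S ⊆ Iio o)
    (hub : ∀ b < o, ∃ x ∈ S, b ≤ x) : Cardinal.lift.{1} o.cof ≤ #S := by
  have hT : IsCofinal (Subtype.val ⁻¹' S : Set (Iio o)) := by
    intro a
    obtain ⟨x, hxS, hax⟩ := hub a.1 a.2
    exact ⟨⟨x, hS hxS⟩, hxS, hax⟩
  have h1 := Order.cof_le hT
  have h2 : Order.cof (Iio o) ≤ #(Subtype.val ⁻¹' S : Set (Iio o)) := h1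
  rw [Ordinal.cof_Iio, ← Ordinal.lift_cof,
    Cardinal.mk_preimage_of_injective_of_subset_range Subtype.val S Subtype.val_injective
      (by rw [Subtype.range_val]; exact hS)] at h2
  exact h2

lemma bounded_of_mk_lt {c : Cardinal.{0}} (hc : c.IsRegular) {S : Set Ordinal.{0}}
    (hS : S ⊆ Iio c.ord) (h : #S < Cardinal.lift.{1} c) : ∃ b < c.ord, ∀ x ∈ S, x ≤ b := by
  by_contra hcon
  push_neg at hcon
  have := lift_cof_le_mk_of_unbounded hS (fun b hb => by
    obtain ⟨x, hxS, hx⟩ := hcon b hb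
    exact ⟨x, hxS, hx.le⟩)
  rw [hc.cof_eq] at this
  exact absurd h (not_lt.2 this)

lemma unbounded_of_le_mk {c : Cardinal.{0}} (hc : c.IsRegular) {S : Set Ordinal.{0}}
    (hS : S ⊆ Iio c.ord) (h : Cardinal.lift.{1} c ≤ #S) : ∀ b < c.ord, ∃ x ∈ S, b < x := by
  intro b hb
  by_contra hcon
  push_neg at hcon
  have hsub : S ⊆ Iio (b + 1) := fun x hx => lt_of_le_of_lt (hcon x hx) (lt_add_one b)
  have h1 : #S ≤ Cardinal.lift.{1} (b + 1).card := by
    rw [← Ordinal.mk_Iio_ordinal]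
    exact Cardinal.mk_le_mk_of_subset hsub
  have h2 : (b + 1).card < c := by
    rw [← Cardinal.lt_ord]
    rw [Ordinal.add_one_eq_succ]
    exact (Cardinal.isSuccLimit_ord hc.aleph0_le).succ_lt hb
  exact absurd (h.trans h1) (not_le.2 (Cardinal.lift_lt.2 h2))

lemma exists_closure_point (fA fB : Ordinal.{0} → Ordinal.{0}) {κo : Ordinal.{0}}
    (hcof : ℵ₀ < κo.cof)
    (hfA : ∀ x < κo, x < fA x ∧ fA x < κo) (hfB : ∀ x < κo, x < fB x ∧ fB x < κo)
    (hmA : ∀ x y, x ≤ y → y < κo → fA x ≤ fA y) (hmB : ∀ x y, x ≤ y → y < κo → fB x ≤ fB y)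
    {x₀ : Ordinal.{0}} (hx₀ : x₀ < κo) :
    ∃ γ < κo, x₀ < γ ∧ ∀ x < γ, fA x < γ ∧ fB x < γ := by
  set m : Ordinal.{0} → Ordinal.{0} := fun x => max (fA x) (fB x) with hm
  set g : ℕ → Ordinal.{0} := fun n => m^[n] x₀ with hg
  have hgs : ∀ n, g n < κo ∧ g n < g (n + 1) := by
    intro n
    induction n with
    | zero =>
      refine ⟨hx₀, ?_⟩
      have : g 1 = m x₀ := by simp [hg]
      rw [this]
      exact lt_max_of_lt_left (hfA x₀ hx₀).1
    | succ k ih =>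
      have hk : g (k + 1) = m (g k) := by simp [hg, Function.iterate_succ_apply']
      have hk2 : g (k + 2) = m (g (k + 1)) := by simp [hg, Function.iterate_succ_apply']
      have h1 : g (k + 1) < κo := by
        rw [hk]
        exact max_lt (hfA _ ih.1).2 (hfB _ ih.1).2
      refine ⟨h1, ?_⟩
      rw [hk2]
      exact lt_max_of_lt_left (hfA _ h1).1
  have hgκ : ∀ n, g n < κo := fun n => (hgs n).1
  have hbdd : BddAbove (Set.range g) := ⟨κo, by rintro _ ⟨n, rfl⟩; exact (hgκ n).le⟩
  set γ : Ordinal.{0} := ⨆ n, g n with hγ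
  have hle : ∀ n, g n ≤ γ := fun n => le_ciSup hbdd n
  have hγκ : γ < κo := Ordinal.iSup_lt_ord (by rw [Cardinal.mk_nat]; exact hcof) hgκ
  have hlt : ∀ x < γ, ∃ n, x < g n := fun x hx => (lt_ciSup_iff hbdd).1 hx
  refine ⟨γ, hγκ, lt_of_lt_of_le (hgs 0).2 (hle 1), fun x hx => ?_⟩
  obtain ⟨n, hn⟩ := hlt x hx
  have hgn1 : g (n + 1) = m (g n) := by simp [hg, Function.iterate_succ_apply']
  constructor
  · calc fA x ≤ fA (g n) := hmA x (g n) hn.le (hgκ n)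
      _ ≤ g (n + 1) := by rw [hgn1]; exact le_max_left _ _
      _ < g (n + 2) := (hgs (n + 1)).2
      _ ≤ γ := hle (n + 2)
  · calc fB x ≤ fB (g n) := hmB x (g n) hn.le (hgκ n)
      _ ≤ g (n + 1) := by rw [hgn1]; exact le_max_right _ _
      _ < g (n + 2) := (hgs (n + 1)).2
      _ ≤ γ := hle (n + 2)

theorem stmt_19 (κ θ : Cardinal.{0}) (hκreg : κ.IsRegular) (hκunc : ℵ₀ < κ)
    (hθreg : θ.IsRegular) (hθκ : θ < κ)
    (c : Ordinal.{0} → Ordinal.{0} → Ordinal.{0})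
    (hcθ : ∀ α β : Ordinal, α < β → β < κ.ord → c α β < θ.ord)
    -- `c` witnesses `U(κ, 2, θ, 3)`
    (hU : ∀ σ : Cardinal, σ < 3 →
      ∀ 𝒜 : Set (Set Ordinal.{0}),
        (∀ a ∈ 𝒜, a ⊆ Set.Iio κ.ord ∧ Cardinal.mk ↥a = Cardinal.lift.{1,0} σ) →
        (∀ a ∈ 𝒜, ∀ b ∈ 𝒜, a ≠ b → Disjoint a b) →
        Cardinal.mk ↥𝒜 = Cardinal.lift.{1,0} κ →
        ∀ i < θ.ord, ∃ a ∈ 𝒜, ∃ b ∈ 𝒜, sSup a < sInf b ∧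
          ∀ x ∈ a, ∀ y ∈ b, i < c x y)
    (A B : Set Ordinal)
    (hA : A ⊆ Set.Iio κ.ord) (hAκ : Cardinal.mk ↥A = Cardinal.lift.{1,0} κ)
    (hB : B ⊆ Set.Iio κ.ord) (hBκ : Cardinal.mk ↥B = Cardinal.lift.{1,0} κ) :
    ∃ η ∈ A, otp {x : Ordinal | ∃ β ∈ B, η < β ∧ c η β = x} =
      Ordinal.lift.{1} θ.ord := by
  by_contra hcon
  push_neg at hcon
  have hSsub : ∀ η : Ordinal, {x | ∃ β ∈ B, η < β ∧ c η β = x} ⊆ Iio θ.ord := by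
    rintro η x ⟨β, hβ, hlt, rfl⟩
    exact hcθ η β hlt (hB hβ)
  have hbdd : ∀ η, η ∈ A → ∃ j, j < θ.ord ∧
      ∀ x ∈ {x | ∃ β ∈ B, η < β ∧ c η β = x}, x ≤ j := by
    intro η hη
    have h1 := otp_le_lift (hSsub η)
    have h2 : otp {x | ∃ β ∈ B, η < β ∧ c η β = x} < Ordinal.lift.{1} θ.ord :=
      lt_of_le_of_ne h1 (hcon η hη)
    have h3 : #({x | ∃ β ∈ B, η < β ∧ c η β = x} : Set Ordinal) < Cardinal.lift.{1} θ := by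
      rw [← card_otp]
      apply Cardinal.lt_ord.1
      rwa [← Cardinal.lift_ord]
    obtain ⟨b, hb, hbd⟩ := bounded_of_mk_lt hθreg (hSsub η) h3
    exact ⟨b, hb, hbd⟩
  choose! jf hjf1 hjf2 using hbdd
  have key : ∃ i < θ.ord, ∀ b < κ.ord, ∃ η, (η ∈ A ∧ jf η ≤ i) ∧ b < η := by
    by_contra hk
    push_neg at hk
    choose! bb hbb1 hbb2 using hk
    have hR : (bb '' Iio θ.ord) ⊆ Iio κ.ord := by
      rintro _ ⟨j, hj, rfl⟩
      exact hbb1 j hj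
    have hRmk : #(bb '' Iio θ.ord) < Cardinal.lift.{1} κ := by
      calc #(bb '' Iio θ.ord) ≤ #(Iio θ.ord) := Cardinal.mk_image_le
        _ = Cardinal.lift.{1} θ := by rw [Ordinal.mk_Iio_ordinal, Cardinal.card_ord]
        _ < Cardinal.lift.{1} κ := Cardinal.lift_lt.2 hθκ
    obtain ⟨b, hb, hbd⟩ := bounded_of_mk_lt hκreg hR hRmk
    obtain ⟨x, hxA, hbx⟩ := unbounded_of_le_mk hκreg hA hAκ.ge b hb
    have h1 : x ≤ bb (jf x) := hbb2 (jf x) (hjf1 x hxA) x ⟨hxA, le_rfl⟩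
    have h2 : bb (jf x) ≤ b := hbd _ ⟨jf x, hjf1 x hxA, rfl⟩
    exact absurd (h1.trans h2) (not_le.2 hbx)
  obtain ⟨i, hiθ, hub⟩ := key
  set fA : Ordinal → Ordinal := fun x => sInf {y | (y ∈ A ∧ jf y ≤ i) ∧ x < y} with hfA_def
  set fB : Ordinal → Ordinal := fun x => sInf {y | y ∈ B ∧ x < y} with hfB_def
  have hBub := unbounded_of_le_mk hκreg hB hBκ.ge
  have hfAne : ∀ x < κ.ord, {y | (y ∈ A ∧ jf y ≤ i) ∧ x < y}.Nonempty := by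
    intro x hx
    obtain ⟨η, h1, h2⟩ := hub x hx
    exact ⟨η, h1, h2⟩
  have hfBne : ∀ x < κ.ord, {y | y ∈ B ∧ x < y}.Nonempty := by
    intro x hx
    obtain ⟨β, h1, h2⟩ := hBub x hx
    exact ⟨β, h1, h2⟩
  have hfAmem : ∀ x < κ.ord, ((fA x ∈ A ∧ jf (fA x) ≤ i) ∧ x < fA x) := fun x hx =>
    csInf_mem (hfAne x hx)
  have hfBmem : ∀ x < κ.ord, (fB x ∈ B ∧ x < fB x) := fun x hx => csInf_mem (hfBne x hx)
  have hfAκ : ∀ x < κ.ord, fA x < κ.ord := fun x hx => hA (hfAmem x hx).1.1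
  have hfBκ : ∀ x < κ.ord, fB x < κ.ord := fun x hx => hB (hfBmem x hx).1
  have hfAprop : ∀ x < κ.ord, x < fA x ∧ fA x < κ.ord := fun x hx =>
    ⟨(hfAmem x hx).2, hfAκ x hx⟩
  have hfBprop : ∀ x < κ.ord, x < fB x ∧ fB x < κ.ord := fun x hx =>
    ⟨(hfBmem x hx).2, hfBκ x hx⟩
  have hmA : ∀ x y, x ≤ y → y < κ.ord → fA x ≤ fA y := fun x y hxy hy =>
    csInf_le_csInf (OrderBot.bddBelow _) (hfAne y hy)
      (fun z hz => ⟨hz.1, lt_of_le_of_lt hxy hz.2⟩)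
  have hmB : ∀ x y, x ≤ y → y < κ.ord → fB x ≤ fB y := fun x y hxy hy =>
    csInf_le_csInf (OrderBot.bddBelow _) (hfBne y hy)
      (fun z hz => ⟨hz.1, lt_of_le_of_lt hxy hz.2⟩)
  have hcof : ℵ₀ < κ.ord.cof := by rw [hκreg.cof_eq]; exact hκunc
  set D : Set Ordinal := {γ | γ < κ.ord ∧ ∀ x < γ, fA x < γ ∧ fB x < γ} with hD_def
  have hDsub : D ⊆ Iio κ.ord := fun γ hγ => hγ.1
  have hDub : ∀ b < κ.ord, ∃ γ ∈ D, b < γ := by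
    intro b hb
    obtain ⟨γ, h1, h2, h3⟩ := exists_closure_point fA fB hcof hfAprop hfBprop hmA hmB hb
    exact ⟨γ, ⟨h1, h3⟩, h2⟩
  set P : Ordinal → Set Ordinal := fun γ => {fA γ, fB (fA γ)} with hP_def
  have hPlt : ∀ γ ∈ D, ∀ x ∈ P γ, γ < x := by
    intro γ hγ x hx
    rcases hx with rfl | hx
    · exact (hfAmem γ hγ.1).2
    · rw [Set.mem_singleton_iff] at hx
      subst hx
      exact lt_trans (hfAmem γ hγ.1).2 (hfBmem (fA γ) (hfAκ γ hγ.1)).2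
  have hPsep : ∀ γ ∈ D, ∀ γ' ∈ D, γ < γ' → ∀ x ∈ P γ, x < γ' := by
    intro γ hγ γ' hγ' hlt x hx
    have h1 : fA γ < γ' := (hγ'.2 γ hlt).1
    have h2 : fB (fA γ) < γ' := (hγ'.2 (fA γ) h1).2
    rcases hx with rfl | hx
    · exact h1
    · rw [Set.mem_singleton_iff] at hx
      subst hx
      exact h2
  have hPdisj : ∀ γ ∈ D, ∀ γ' ∈ D, γ ≠ γ' → Disjoint (P γ) (P γ') := by
    have key : ∀ γ ∈ D, ∀ γ' ∈ D, γ < γ' → Disjoint (P γ) (P γ') := by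
      intro γ hγ γ' hγ' hlt
      rw [Set.disjoint_left]
      intro x hx hx'
      exact absurd (hPsep γ hγ γ' hγ' hlt x hx) (not_lt.2 (hPlt γ' hγ' x hx').le)
    intro γ hγ γ' hγ' hne
    rcases lt_or_gt_of_ne hne with h | h
    · exact key γ hγ γ' hγ' h
    · exact (key γ' hγ' γ hγ h).symm
  have h𝒜1 : ∀ a ∈ P '' D, a ⊆ Iio κ.ord ∧ #a = Cardinal.lift.{1,0} 2 := by
    rintro _ ⟨γ, hγ, rfl⟩
    constructor
    · intro x hx
      rcases hx with rfl | hx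
      · exact hfAκ γ hγ.1
      · rw [Set.mem_singleton_iff] at hx
        subst hx
        exact hfBκ (fA γ) (hfAκ γ hγ.1)
    · have hne : fA γ ∉ ({fB (fA γ)} : Set Ordinal) := by
        simp only [Set.mem_singleton_iff]
        exact ne_of_lt (hfBmem (fA γ) (hfAκ γ hγ.1)).2
      show #(↥(insert (fA γ) ({fB (fA γ)} : Set Ordinal))) = _
      rw [Cardinal.mk_insert hne, Cardinal.mk_singleton]
      norm_num
  have h𝒜2 : ∀ a ∈ P '' D, ∀ b ∈ P '' D, a ≠ b → Disjoint a b := by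
    rintro _ ⟨γ, hγ, rfl⟩ _ ⟨γ', hγ', rfl⟩ hne
    refine hPdisj γ hγ γ' hγ' ?_
    rintro rfl
    exact hne rfl
  have h𝒜3 : #(P '' D) = Cardinal.lift.{1,0} κ := by
    have hinj : Set.InjOn P D := by
      intro γ hγ γ' hγ' he
      by_contra hne
      have hd := hPdisj γ hγ γ' hγ' hne
      rw [he] at hd
      exact Set.disjoint_left.1 hd (Set.mem_insert _ _) (Set.mem_insert _ _)
    rw [Cardinal.mk_image_eq_of_injOn P D hinj]
    apply le_antisymm
    · calc #D ≤ #(Iio κ.ord) := Cardinal.mk_le_mk_of_subset hDsub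
        _ = Cardinal.lift.{1} κ := by rw [Ordinal.mk_Iio_ordinal, Cardinal.card_ord]
    · have := lift_cof_le_mk_of_unbounded hDsub
        (fun b hb => (hDub b hb).imp fun γ h => ⟨h.1, h.2.le⟩)
      rwa [hκreg.cof_eq] at this
  obtain ⟨a, ha, b', hb', hab, hgt⟩ := hU 2 (by norm_num) (P '' D) h𝒜1 h𝒜2 h𝒜3 i hiθ
  obtain ⟨γ₁, hγ₁, rfl⟩ := ha
  obtain ⟨γ₂, hγ₂, rfl⟩ := hb'
  have hηA : fA γ₁ ∈ A ∧ jf (fA γ₁) ≤ i := (hfAmem γ₁ hγ₁.1).1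
  have hβB : fB (fA γ₂) ∈ B := (hfBmem (fA γ₂) (hfAκ γ₂ hγ₂.1)).1
  have hηβ : fA γ₁ < fB (fA γ₂) := by
    have hfin : BddAbove (P γ₁) :=
      ((Set.finite_singleton (fB (fA γ₁))).insert (fA γ₁)).bddAbove
    calc fA γ₁ ≤ sSup (P γ₁) := le_csSup hfin (Set.mem_insert _ _)
      _ < sInf (P γ₂) := hab
      _ ≤ fB (fA γ₂) := csInf_le (OrderBot.bddBelow _)
          (Set.mem_insert_iff.2 (Or.inr rfl))
  have hmem : c (fA γ₁) (fB (fA γ₂)) ∈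
      {x | ∃ β ∈ B, fA γ₁ < β ∧ c (fA γ₁) β = x} := ⟨fB (fA γ₂), hβB, hηβ, rfl⟩
  have h1 : c (fA γ₁) (fB (fA γ₂)) ≤ jf (fA γ₁) := hjf2 (fA γ₁) hηA.1 _ hmem
  have h2 : i < c (fA γ₁) (fB (fA γ₂)) :=
    hgt (fA γ₁) (Set.mem_insert _ _) (fB (fA γ₂)) (Set.mem_insert_iff.2 (Or.inr rfl))
  exact absurd (h1.trans hηA.2) (not_le.2 h2)
end
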